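/- Let Δ be a maximal nonhyperelliptic lattice polygon, τ a one-dimensional face of the interior polygon Δ⁽¹⁾, and τ⁽⁻¹⁾ the corresponding relaxed face of Δ. Writing |σ| for the number of lattice points on a face σ: if |τ⁽⁻¹⁾| - 1 > |τ|, then the number of column vectors of Δ whose base facet is τ⁽⁻¹⁾ equals |τ⁽⁻¹⁾| - 1 - |τ|; and if |τ⁽⁻¹⁾| - 1 ≤ |τ|, there are no column vectors with base facet τ⁽⁻¹⁾. -/

import Mathlib

open Set Finset

noncomputable section

/-- A lattice point viewed as a point of the real plane. -/
def toR (p : ℤ × ℤ) : ℝ × ℝ := ((p.1 : ℝ), (p.2 : ℝ))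

/-- The real convex hull of a finite set of lattice points. -/
def polyHull (V : Finset (ℤ × ℤ)) : Set (ℝ × ℝ) :=
  convexHull ℝ (toR '' (V : Set (ℤ × ℤ)))

/-- `V` spans a two-dimensional (lattice) polygon. -/
def IsLatticePolygon (V : Finset (ℤ × ℤ)) : Prop :=
  ∃ p q r : ℤ × ℤ, p ∈ V ∧ q ∈ V ∧ r ∈ V ∧
    AffineIndependent ℝ ![toR p, toR q, toR r]

/-- Interior lattice points of the polygon spanned by `V`. -/
def intPts (V : Finset (ℤ × ℤ)) : Set (ℤ × ℤ) :=
  {p | toR p ∈ interior (polyHull V)}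

/-- Boundary lattice points of the polygon spanned by `V`. -/
def bdPts (V : Finset (ℤ × ℤ)) : Set (ℤ × ℤ) :=
  {p | toR p ∈ frontier (polyHull V)}

/-- All lattice points of the polygon spanned by `V`. -/
def latPts (V : Finset (ℤ × ℤ)) : Set (ℤ × ℤ) :=
  {p | toR p ∈ polyHull V}

/-- The interior polygon: convex hull of the interior lattice points. -/
def intPoly (V : Finset (ℤ × ℤ)) : Set (ℝ × ℝ) :=
  convexHull ℝ (toR '' intPts V)

/-- `Δ` is nonhyperelliptic: its interior polygon is two-dimensional. -/
def Nonhyperelliptic (V : Finset (ℤ × ℤ)) : Prop :=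
  ∃ p q r : ℤ × ℤ, p ∈ intPts V ∧ q ∈ intPts V ∧ r ∈ intPts V ∧
    AffineIndependent ℝ ![toR p, toR q, toR r]

/-- The integer line `a x + b y = d` (with `gcd(a,b) = 1`) supports a
one-dimensional face of the convex set `S`. -/
def IsFaceLine (S : Set (ℝ × ℝ)) (a b d : ℤ) : Prop :=
  IsCoprime a b ∧ (∀ x ∈ S, (a : ℝ) * x.1 + (b : ℝ) * x.2 ≤ (d : ℝ)) ∧
  ∃ p q : ℝ × ℝ, p ∈ S ∧ q ∈ S ∧ p ≠ q ∧
    (a : ℝ) * p.1 + (b : ℝ) * p.2 = (d : ℝ) ∧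
    (a : ℝ) * q.1 + (b : ℝ) * q.2 = (d : ℝ)

/-- A lattice polygon is hyperelliptic if it has at least two interior lattice
points and they are all collinear. -/
def Hyperelliptic (V : Finset (ℤ × ℤ)) : Prop :=
  2 ≤ (intPts V).ncard ∧ Collinear ℝ (toR '' intPts V)

/-- A lattice polygon is maximal if it is not properly contained in another
lattice polygon with the same interior lattice points. -/
def MaximalPoly (V : Finset (ℤ × ℤ)) : Prop :=
  IsLatticePolygon V ∧ ¬ ∃ W : Finset (ℤ × ℤ), IsLatticePolygon W ∧
    polyHull V ⊂ polyHull W ∧ intPts W = intPts V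

/-- A unimodular affine map `x ↦ Ax + b` of `ℤ²`. -/
def unimodMap (a b c d e f : ℤ) (p : ℤ × ℤ) : ℤ × ℤ :=
  (a * p.1 + b * p.2 + e, c * p.1 + d * p.2 + f)

/-- Lattice equivalence of lattice polygons: a unimodular affine transformation
carries the lattice points of one onto the lattice points of the other. -/
def LatEquiv (V W : Finset (ℤ × ℤ)) : Prop :=
  ∃ a b c d e f : ℤ, (a * d - b * c = 1 ∨ a * d - b * c = -1) ∧
    unimodMap a b c d e f '' latPts V = latPts W

/-- The maximal hyperelliptic polygon
`E_k = conv((0,0), (0,2), (g+k,0), (g+2-k,2))`. -/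
def EkVerts (g k : ℤ) : Finset (ℤ × ℤ) :=
  {(0, 0), (0, 2), (g + k, 0), (g + 2 - k, 2)}

/-- `v` is a column vector of the polygon spanned by `V` whose base facet lies
on the line `a x + b y = d`: `v ≠ 0` and translating by `v` every lattice point
of the polygon not on that line lands back in the polygon. -/
def IsColVec (V : Finset (ℤ × ℤ)) (a b d : ℤ) (v : ℤ × ℤ) : Prop :=
  v ≠ 0 ∧ ∀ p : ℤ × ℤ, p ∈ latPts V → a * p.1 + b * p.2 ≠ d → p + v ∈ latPts V

namespace CVAux
def zf (e p : ℤ × ℤ) : ℤ := e.1 * p.1 + e.2 * p.2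
def rf (e : ℤ × ℤ) (x : ℝ × ℝ) : ℝ := (e.1 : ℝ) * x.1 + (e.2 : ℝ) * x.2
lemma rf_toR (e p : ℤ × ℤ) : rf e (toR p) = (zf e p : ℝ) := by
  simp only [rf, zf, toR]; push_cast; ring

lemma rf_pair (a b : ℤ) (x : ℝ × ℝ) : rf (a, b) x = (a : ℝ) * x.1 + (b : ℝ) * x.2 := rfl

lemma zf_pair (a b : ℤ) (p : ℤ × ℤ) : zf (a, b) p = a * p.1 + b * p.2 := rfl
lemma rf_combo (e : ℤ × ℤ) (s t : ℝ) (x y : ℝ × ℝ) :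
    rf e (s • x + t • y) = s * rf e x + t * rf e y := by
  simp only [rf, Prod.fst_add, Prod.snd_add, Prod.smul_fst, Prod.smul_snd, smul_eq_mul]; ring
lemma zf_add (e p q : ℤ × ℤ) : zf e (p + q) = zf e p + zf e q := by
  simp only [zf, Prod.fst_add, Prod.snd_add]; ring
lemma zf_smul (e : ℤ × ℤ) (m : ℤ) (p : ℤ × ℤ) : zf e (m • p) = m * zf e p := by
  simp only [zf, Prod.smul_fst, Prod.smul_snd, smul_eq_mul]; ring
lemma zf_comb (e u wc : ℤ × ℤ) (m j : ℤ) : zf e (m • u + j • wc) = m * zf e u + j * zf e wc := by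
  simp only [zf, Prod.fst_add, Prod.snd_add, Prod.smul_fst, Prod.smul_snd, smul_eq_mul]; ring
lemma rf_add (e : ℤ × ℤ) (x y : ℝ × ℝ) : rf e (x + y) = rf e x + rf e y := by
  simp only [rf, Prod.fst_add, Prod.snd_add]; ring
lemma rf_smul (e : ℤ × ℤ) (s : ℝ) (x : ℝ × ℝ) : rf e (s • x) = s * rf e x := by
  simp only [rf, Prod.smul_fst, Prod.smul_snd, smul_eq_mul]; ring
lemma convex_halfplane (e : ℤ × ℤ) (r : ℝ) : Convex ℝ {x : ℝ × ℝ | r ≤ rf e x} := by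
  intro x hx y hy s t hs ht hst
  simp only [mem_setOf_eq] at *
  rw [rf_combo]
  have h1 := mul_le_mul_of_nonneg_left hx hs
  have h2 := mul_le_mul_of_nonneg_left hy ht
  have h3 : s * r + t * r = r := by rw [← add_mul, hst, one_mul]
  linarith

lemma hull_lb {S : Set (ℝ × ℝ)} (e : ℤ × ℤ) (r : ℝ) (h : ∀ y ∈ S, r ≤ rf e y)
    {x : ℝ × ℝ} (hx : x ∈ convexHull ℝ S) : r ≤ rf e x :=
  convexHull_min (fun y hy => h y hy : S ⊆ {x | r ≤ rf e x}) (convex_halfplane e r) hx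

lemma rf_neg (e : ℤ × ℤ) (x : ℝ × ℝ) : rf e (-x) = -rf e x := by
  simp only [rf, Prod.fst_neg, Prod.snd_neg]; ring

lemma interior_shift (V : Finset (ℤ × ℤ)) (pa : ℤ × ℤ) (hpaI : pa ∈ intPts V) (d : ℝ × ℝ) :
    ∃ δ : ℝ, 0 < δ ∧ toR pa + δ • d ∈ polyHull V := by
  have hnh : polyHull V ∈ nhds (toR pa) :=
    mem_interior_iff_mem_nhds.mp (interior_mono (subset_refl _) hpaI)
  obtain ⟨ε, hε, hball⟩ := Metric.mem_nhds_iff.mp hnh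
  refine ⟨ε / (2 * (‖d‖ + 1)), by positivity, ?_⟩
  apply hball
  have hd : (0:ℝ) ≤ ‖d‖ := norm_nonneg d
  have : dist (toR pa + (ε / (2 * (‖d‖ + 1))) • d) (toR pa) = (ε / (2 * (‖d‖ + 1))) * ‖d‖ := by
    rw [dist_eq_norm, add_sub_cancel_left, norm_smul, Real.norm_eq_abs,
      abs_of_pos (by positivity)]
  rw [Metric.mem_ball, this]
  rw [div_mul_eq_mul_div, div_lt_iff₀ (by positivity)]
  nlinarith

lemma rf_sum {ι : Type*} (e : ℤ × ℤ) (s : Finset ι) (f : ι → ℝ × ℝ) :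
    rf e (∑ i ∈ s, f i) = ∑ i ∈ s, rf e (f i) := by
  classical
  induction s using Finset.induction with
  | empty => simp [rf]
  | insert _ _ h ih => rw [Finset.sum_insert h, Finset.sum_insert h, rf_add, ih]

lemma hull_slice_key {S : Set (ℝ × ℝ)} (f : ℤ × ℤ) (L : ℝ)
    (hS : ∀ y ∈ S, rf f y ≤ L) {x : ℝ × ℝ} (hx : x ∈ convexHull ℝ S) (hxL : rf f x = L)
    {C : Prop}
    (hC : ∀ {ι : Type} (t : Finset ι) (wg : ι → ℝ) (z : ι → ℝ × ℝ),
      (∀ i ∈ t, 0 ≤ wg i) → ∑ i ∈ t, wg i = 1 → (∀ i ∈ t, z i ∈ S) →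
      (∑ i ∈ t, wg i • z i) = x → (∀ i ∈ t, 0 < wg i → rf f (z i) = L) → C) : C := by
  classical
  rw [_root_.convexHull_eq] at hx
  obtain ⟨ι, t, wg, z, hw0, hw1, hzS, hcm⟩ := hx
  rw [Finset.centerMass_eq_of_sum_1 _ _ hw1] at hcm
  refine hC t wg z hw0 hw1 hzS hcm ?_
  -- positive-weight generators live at level L
  have hfx : ∑ i ∈ t, wg i * rf f (z i) = L := by
    rw [← hxL, ← hcm, rf_sum]
    exact (Finset.sum_congr rfl (fun i _ => rf_smul _ _ _)).symm
  have hzero : ∑ i ∈ t, wg i * (L - rf f (z i)) = 0 := by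
    have : ∑ i ∈ t, wg i * (L - rf f (z i)) =
        (∑ i ∈ t, wg i) * L - ∑ i ∈ t, wg i * rf f (z i) := by
      rw [Finset.sum_mul, ← Finset.sum_sub_distrib]
      exact Finset.sum_congr rfl (fun i _ => by ring)
    rw [this, hw1, hfx]; ring
  have hnn : ∀ i ∈ t, 0 ≤ wg i * (L - rf f (z i)) := fun i hi =>
    mul_nonneg (hw0 i hi) (by linarith [hS (z i) (hzS i hi)])
  have hez := (Finset.sum_eq_zero_iff_of_nonneg hnn).mp hzero
  intro i hi hwi
  have := hez i hi
  have h2 : L - rf f (z i) = 0 := by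
    rcases mul_eq_zero.mp this with h | h
    · exact absurd h (ne_of_gt hwi)
    · exact h
  linarith

lemma hull_slice_lb {S : Set (ℝ × ℝ)} (f g : ℤ × ℤ) (L m : ℝ)
    (hS : ∀ y ∈ S, rf f y ≤ L) (hSm : ∀ y ∈ S, rf f y = L → m ≤ rf g y)
    {x : ℝ × ℝ} (hx : x ∈ convexHull ℝ S) (hxL : rf f x = L) : m ≤ rf g x := by
  classical
  refine hull_slice_key f L hS hx hxL ?_
  intro ι t wg z hw0 hw1 hzS hcm hlev
  have hgx : rf g x = ∑ i ∈ t, wg i * rf g (z i) := by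
    rw [← hcm, rf_sum]
    exact Finset.sum_congr rfl (fun i _ => rf_smul _ _ _)
  rw [hgx]
  calc m = ∑ i ∈ t, wg i * m := by rw [← Finset.sum_mul, hw1, one_mul]
  _ ≤ ∑ i ∈ t, wg i * rf g (z i) := by
      refine Finset.sum_le_sum (fun i hi => ?_)
      rcases lt_or_eq_of_le (hw0 i hi) with hpos | hzero
      · exact mul_le_mul_of_nonneg_left (hSm (z i) (hzS i hi) (hlev i hi hpos)) (le_of_lt hpos)
      · rw [← hzero]; simp
  
lemma hull_slice_mem {S : Set (ℝ × ℝ)} (f : ℤ × ℤ) (L : ℝ)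
    (hS : ∀ y ∈ S, rf f y ≤ L)
    {x : ℝ × ℝ} (hx : x ∈ convexHull ℝ S) (hxL : rf f x = L) : ∃ y ∈ S, rf f y = L := by
  classical
  refine hull_slice_key f L hS hx hxL ?_
  intro ι t wg z hw0 hw1 hzS hcm hlev
  have : ∃ i ∈ t, 0 < wg i := by
    by_contra hall
    push_neg at hall
    have : ∑ i ∈ t, wg i ≤ 0 := Finset.sum_nonpos (fun i hi => hall i hi)
    linarith
  obtain ⟨i, hi, hwi⟩ := this
  exact ⟨z i, hzS i hi, hlev i hi hwi⟩


section Dual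
variable {α β : ℤ} {u wc tc : ℤ × ℤ}
  (h11 : α * u.1 + tc.1 * wc.1 = 1) (h12 : β * u.1 + tc.2 * wc.1 = 0)
  (h21 : α * u.2 + tc.1 * wc.2 = 0) (h22 : β * u.2 + tc.2 * wc.2 = 1)
include h11 h12 h21 h22
lemma recon_real (x : ℝ × ℝ) : (rf (α, β) x) • toR u + (rf tc x) • toR wc = x := by
  have c11 : (α : ℝ) * u.1 + tc.1 * wc.1 = 1 := by exact_mod_cast congrArg (Int.cast : ℤ → ℝ) h11
  have c12 : (β : ℝ) * u.1 + tc.2 * wc.1 = 0 := by exact_mod_cast congrArg (Int.cast : ℤ → ℝ) h12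
  have c21 : (α : ℝ) * u.2 + tc.1 * wc.2 = 0 := by exact_mod_cast congrArg (Int.cast : ℤ → ℝ) h21
  have c22 : (β : ℝ) * u.2 + tc.2 * wc.2 = 1 := by exact_mod_cast congrArg (Int.cast : ℤ → ℝ) h22
  have h1 : ((rf (α, β) x) • toR u + (rf tc x) • toR wc).1 = x.1 := by
    simp only [Prod.fst_add, Prod.smul_fst, smul_eq_mul, rf, toR]
    linear_combination x.1 * c11 + x.2 * c12
  have h2 : ((rf (α, β) x) • toR u + (rf tc x) • toR wc).2 = x.2 := by
    simp only [Prod.snd_add, Prod.smul_snd, smul_eq_mul, rf, toR]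
    linear_combination x.1 * c21 + x.2 * c22
  exact Prod.ext h1 h2
lemma coords_ext {x y : ℝ × ℝ} (hl : rf (α, β) x = rf (α, β) y) (ht : rf tc x = rf tc y) :
    x = y := by
  rw [← recon_real h11 h12 h21 h22 x, ← recon_real h11 h12 h21 h22 y, hl, ht]

lemma recon_int (p : ℤ × ℤ) : p = (zf (α, β) p) • u + (zf tc p) • wc := by
  have h1 : ((zf (α, β) p) • u + (zf tc p) • wc).1 = p.1 := by
    simp only [Prod.fst_add, Prod.smul_fst, smul_eq_mul, zf]
    linear_combination p.1 * h11 + p.2 * h12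
  have h2 : ((zf (α, β) p) • u + (zf tc p) • wc).2 = p.2 := by
    simp only [Prod.snd_add, Prod.smul_snd, smul_eq_mul, zf]
    linear_combination p.1 * h21 + p.2 * h22
  exact (Prod.ext h1 h2).symm

/-- Koelman-type lemma: no lattice point of the polygon lies above level `c+1`. -/
lemma levels_le (V : Finset (ℤ × ℤ)) (c : ℤ)
    (hu1 : zf (α, β) u = 1) (hw0 : zf (α, β) wc = 0) (htw : zf tc wc = 1) (htu : zf tc u = 0)
    (hsup : ∀ x ∈ intPoly V, rf (α, β) x ≤ (c : ℝ))
    (pa pb : ℤ × ℤ) (hpaI : pa ∈ intPts V) (hpal : zf (α, β) pa = c)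
    (hpbI : pb ∈ intPts V) (hpbl : zf (α, β) pb = c)
    (hab : zf tc pa < zf tc pb) :
    ∀ p ∈ latPts V, zf (α, β) p ≤ c + 1 := by
  intro q hq
  by_contra hcon
  push_neg at hcon
  set a := zf tc pa with ha_def
  set tb := zf tc pb with htb_def
  set tq := zf tc q with htq_def
  set s := zf (α, β) q - c - 1 with hs_def
  have hs1 : 1 ≤ s := by omega
  have hsR : (0 : ℝ) < (s : ℝ) := by exact_mod_cast hs1.trans_lt' (by norm_num)
  -- the ceiling-division choice of n
  set n := (tq + s * a + s) / (s + 1) with hn_def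
  have hed := Int.mul_ediv_add_emod (tq + s * a + s) (s + 1)
  have hm1 := Int.emod_nonneg (tq + s * a + s) (by omega : s + 1 ≠ 0)
  have hm2 := Int.emod_lt_of_pos (tq + s * a + s) (by omega : 0 < s + 1)
  rw [← hn_def] at hed
  have hn1 : tq + s * a ≤ (s + 1) * n := by omega
  have hn2 : (s + 1) * n ≤ tq + s * a + s := by omega
  set P := polyHull V with hP_def
  have hPconv : Convex ℝ P := convex_convexHull ℝ _
  have hIconv : Convex ℝ (interior P) := hPconv.interior
  -- the adjacent interior point pa + wc
  have hab1R : (1 : ℝ) ≤ (tb : ℝ) - a := by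
    have h' : (a : ℝ) + 1 ≤ (tb : ℝ) := by exact_mod_cast hab
    linarith
  set θ₀ : ℝ := 1 / ((tb : ℝ) - a) with hθ₀
  have hθ₀pos : 0 < θ₀ := by positivity
  have hθ₀le : θ₀ ≤ 1 := by
    rw [hθ₀, div_le_one (by linarith)]; linarith
  have hpa1 : toR (pa + wc) = (1 - θ₀) • toR pa + θ₀ • toR pb := by
    apply coords_ext h11 h12 h21 h22
    · rw [rf_combo, rf_toR, rf_toR, rf_toR]
      have : zf (α, β) (pa + wc) = zf (α, β) pa + zf (α, β) wc := by
        simp only [zf, Prod.fst_add, Prod.snd_add]; ring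
      rw [this, hw0, hpal, hpbl]
      push_cast
      ring
    · rw [rf_combo, rf_toR, rf_toR, rf_toR]
      have : zf tc (pa + wc) = zf tc pa + zf tc wc := by
        simp only [zf, Prod.fst_add, Prod.snd_add]; ring
      rw [this, htw]
      rw [show zf tc pa = a from rfl, show zf tc pb = tb from rfl]
      push_cast [hθ₀]
      field_simp
      ring
  have hpa1I : toR (pa + wc) ∈ interior P := by
    rw [hpa1]
    exact hIconv hpaI hpbI (by linarith) (le_of_lt hθ₀pos) (by ring)
  -- the target lattice point z at level c+1
  set z := (c + 1) • u + n • wc with hz_def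
  have hzl : zf (α, β) z = c + 1 := by rw [hz_def, zf_comb, hu1, hw0]; ring
  have hzt : zf tc z = n := by
    rw [hz_def, zf_comb, htw]
    rw [htu]; ring
  set p' : ℝ × ℝ := ((s + 1 : ℝ) / s) • toR z + (-(1 : ℝ) / s) • toR q with hp'_def
  have hql : zf (α, β) q = c + 1 + s := by omega
  have hp'l : rf (α, β) p' = (c : ℝ) := by
    rw [hp'_def, rf_combo, rf_toR, rf_toR, hzl, hql]
    push_cast
    field_simp
    ring
  set T := ((s + 1 : ℝ) * n - tq) / s with hT_def
  have hp't : rf tc p' = T := by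
    rw [hp'_def, rf_combo, rf_toR, rf_toR, hzt, show zf tc q = tq from rfl, hT_def]
    push_cast
    field_simp
    ring
  have hT1 : (a : ℝ) ≤ T := by
    rw [hT_def, le_div_iff₀ hsR]
    have hc : ((tq + s * a : ℤ) : ℝ) ≤ (((s + 1) * n : ℤ) : ℝ) := by exact_mod_cast hn1
    push_cast at hc
    linarith
  have hT2 : T ≤ (a : ℝ) + 1 := by
    rw [hT_def, div_le_iff₀ hsR]
    have hc : (((s + 1) * n : ℤ) : ℝ) ≤ ((tq + s * a + s : ℤ) : ℝ) := by exact_mod_cast hn2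
    push_cast at hc
    linarith
  set θ₁ : ℝ := T - (a : ℝ) with hθ₁
  have hp'combo : p' = (1 - θ₁) • toR pa + θ₁ • toR (pa + wc) := by
    apply coords_ext h11 h12 h21 h22
    · rw [hp'l, rf_combo, rf_toR, rf_toR]
      have h1 : zf (α, β) (pa + wc) = zf (α, β) pa + zf (α, β) wc := by
        simp only [zf, Prod.fst_add, Prod.snd_add]; ring
      rw [h1, hw0, hpal]
      push_cast
      ring
    · rw [hp't, rf_combo, rf_toR, rf_toR]
      have h1 : zf tc (pa + wc) = zf tc pa + zf tc wc := by
        simp only [zf, Prod.fst_add, Prod.snd_add]; ring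
      rw [h1, htw, show zf tc pa = a from rfl, hθ₁]
      push_cast
      ring
  have hp'I : p' ∈ interior P := by
    rw [hp'combo]
    exact hIconv hpaI hpa1I (by rw [hθ₁]; linarith) (by rw [hθ₁]; linarith) (by ring)
  have hs1R : (0 : ℝ) < (s : ℝ) + 1 := by linarith
  have hcombo2 : toR z = ((s : ℝ) / ((s : ℝ) + 1)) • p' + ((1 : ℝ) / ((s : ℝ) + 1)) • toR q := by
    apply coords_ext h11 h12 h21 h22
    · rw [rf_toR, hzl, rf_combo, hp'l, rf_toR, hql]
      push_cast
      field_simp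
      ring
    · rw [rf_toR, hzt, rf_combo, hp't, rf_toR, show zf tc q = tq from rfl, hT_def]
      push_cast
      field_simp
      ring
  have hzint : toR z ∈ interior P := by
    rw [hcombo2]
    exact Convex.combo_interior_closure_mem_interior hPconv hp'I
      (subset_closure (hq : toR q ∈ P)) (by positivity) (by positivity)
      (by field_simp)
  have hzQ : toR z ∈ intPoly V :=
    subset_convexHull ℝ _ (mem_image_of_mem toR (hzint : z ∈ intPts V))
  have hfin := hsup _ hzQ
  rw [rf_toR, hzl] at hfin
  push_cast at hfin
  linarith



lemma core (V : Finset (ℤ × ℤ)) (c : ℤ)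
    (hu1 : zf (α, β) u = 1) (hw0 : zf (α, β) wc = 0) (htw : zf tc wc = 1) (htu : zf tc u = 0)
    (pa pA : ℤ × ℤ)
    (hpaI : pa ∈ intPts V) (hpal : zf (α, β) pa = c)
    (hpam : ∀ q ∈ intPts V, zf (α, β) q = c → zf tc pa ≤ zf tc q)
    (hpAV : pA ∈ latPts V) (hpAl : zf (α, β) pA = c + 1)
    (hpAm : ∀ q ∈ latPts V, zf (α, β) q = c + 1 → zf tc pA ≤ zf tc q)
    (hL1 : ∀ p ∈ latPts V, zf (α, β) p ≤ c + 1) :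
    (∀ x ∈ polyHull V, rf (α, β) x = (c : ℝ) → (zf tc pa : ℝ) - 1 ≤ rf tc x) ∧
    (∀ p ∈ latPts V, zf (α, β) p ≤ c →
      zf tc pA - (c + 1 - zf (α, β) p) * (zf tc pA - zf tc pa + 1) ≤ zf tc p) ∧
    (∀ v : ℤ × ℤ, (∀ p ∈ latPts V, zf (α, β) p ≠ c + 1 → p + v ∈ latPts V) →
      zf (α, β) v = 1 → zf tc pA - zf tc pa + 1 ≤ zf tc v) ∧
    (∀ p ∈ latPts V, zf (α, β) p ≤ c → ∀ k : ℤ, zf tc pA - zf tc pa + 1 ≤ k →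
      ∃ y ∈ polyHull V, rf (α, β) y = (zf (α, β) p : ℝ) + 1 ∧
        rf tc y ≤ (zf tc p : ℝ) + (k : ℝ)) := by
  set P := polyHull V with hP_def
  have hPconv : Convex ℝ P := convex_convexHull ℝ _
  set a := zf tc pa with ha_def
  set A := zf tc pA with hA_def
  -- ====== Mc ======
  have MC : ∀ x ∈ polyHull V, rf (α, β) x = (c : ℝ) → (a : ℝ) - 1 ≤ rf tc x := by
    intro x hx hxc
    by_contra hcon
    push_neg at hcon
    set T := rf tc x with hT_def
    have hden : (0 : ℝ) < (a : ℝ) - T := by linarith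
    set θ : ℝ := ((a : ℝ) - 1 - T) / ((a : ℝ) - T) with hθ_def
    have hθpos : 0 < θ := by apply div_pos <;> linarith
    have hθlt : θ < 1 := by rw [hθ_def, div_lt_one hden]; linarith
    have hcombo : toR (pa + (-1 : ℤ) • wc) = θ • toR pa + (1 - θ) • x := by
      apply coords_ext h11 h12 h21 h22
      · rw [rf_combo, rf_toR, rf_toR]
        have h1 : zf (α, β) (pa + (-1 : ℤ) • wc) = zf (α, β) pa + (-1) * zf (α, β) wc := by
          simp only [zf, Prod.fst_add, Prod.snd_add, Prod.smul_fst, Prod.smul_snd,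
            smul_eq_mul]; ring
        rw [h1, hw0, hpal, hxc]
        push_cast; ring
      · rw [rf_combo, rf_toR, rf_toR]
        have h1 : zf tc (pa + (-1 : ℤ) • wc) = zf tc pa + (-1) * zf tc wc := by
          simp only [zf, Prod.fst_add, Prod.snd_add, Prod.smul_fst, Prod.smul_snd,
            smul_eq_mul]; ring
        rw [h1, htw, ← ha_def, ← hT_def, hθ_def]
        push_cast
        field_simp
        ring
    have hint : toR (pa + (-1 : ℤ) • wc) ∈ interior P := by
      rw [hcombo]
      exact Convex.combo_interior_closure_mem_interior hPconv hpaI (subset_closure hx)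
        hθpos (by linarith) (by ring)
    have hmem : pa + (-1 : ℤ) • wc ∈ intPts V := hint
    have hlev : zf (α, β) (pa + (-1 : ℤ) • wc) = c := by
      rw [zf_add, zf_smul, hw0, hpal]; ring
    have := hpam _ hmem hlev
    rw [zf_add, zf_smul, htw, ← ha_def] at this
    omega
  -- ====== F ======
  have F : ∀ p ∈ latPts V, zf (α, β) p ≤ c →
      A - (c + 1 - zf (α, β) p) * (A - a + 1) ≤ zf tc p := by
    intro p hp hlc
    set l := zf (α, β) p with hl_def
    set D := c - l with hD_def
    have hD0 : 0 ≤ D := by omega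
    have hnR : (0 : ℝ) < (D : ℝ) + 1 := by
      have : (0 : ℝ) ≤ (D : ℝ) := by exact_mod_cast hD0
      linarith
    set z : ℝ × ℝ := ((1 : ℝ) / ((D : ℝ) + 1)) • toR p + ((D : ℝ) / ((D : ℝ) + 1)) • toR pA
      with hz_def
    have hD0R : (0 : ℝ) ≤ (D : ℝ) := by exact_mod_cast hD0
    have hzP : z ∈ P :=
      hPconv hp hpAV (by positivity) (div_nonneg hD0R (le_of_lt hnR)) (by field_simp; ring)
    have hzl : rf (α, β) z = (c : ℝ) := by
      rw [hz_def, rf_combo, rf_toR, rf_toR, hpAl]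
      rw [show zf (α, β) p = l from rfl, show l = c - D by omega]
      push_cast
      field_simp
      ring
    have hzt := MC z hzP hzl
    rw [hz_def, rf_combo, rf_toR, rf_toR, show zf tc pA = A from rfl] at hzt
    have hzt2 : ((a : ℝ) - 1) * ((D : ℝ) + 1) ≤ (zf tc p : ℝ) + (D : ℝ) * (A : ℝ) := by
      have h' := mul_le_mul_of_nonneg_right hzt (le_of_lt hnR)
      have heq : ((1 : ℝ) / ((D : ℝ) + 1) * (zf tc p : ℝ) +
          (D : ℝ) / ((D : ℝ) + 1) * (A : ℝ)) * ((D : ℝ) + 1)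
          = (zf tc p : ℝ) + (D : ℝ) * (A : ℝ) := by
        field_simp
      rw [heq] at h'
      exact h'
    have hfin : ((A - (c + 1 - l) * (A - a + 1) : ℤ) : ℝ) ≤ ((zf tc p : ℤ) : ℝ) := by
      push_cast
      have hDlc : (c : ℝ) + 1 - (l : ℝ) = (D : ℝ) + 1 := by
        rw [show l = c - D by omega]; push_cast; ring
      rw [hDlc]
      nlinarith [hzt2]
    exact_mod_cast hfin
  -- ====== CB : lower bound for column vectors ======
  have hVlat : ∀ v ∈ V, v ∈ latPts V := fun v hv =>
    subset_convexHull ℝ _ (mem_image_of_mem toR hv)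
  have CB : ∀ v : ℤ × ℤ, (∀ p ∈ latPts V, zf (α, β) p ≠ c + 1 → p + v ∈ latPts V) →
      zf (α, β) v = 1 → A - a + 1 ≤ zf tc v := by
    intro v hmove hv1
    by_contra hcon
    push_neg at hcon
    set k := zf tc v with hk_def
    have hk : k ≤ A - a := by omega
    -- telescoping iteration
    have ITER : ∀ j : ℕ, ∀ p ∈ latPts V, zf (α, β) p + j = c + 1 →
        p + (j : ℤ) • v ∈ latPts V ∧ zf tc (p + (j : ℤ) • v) = zf tc p + j * k := by
      intro j
      induction j with
      | zero => intro p hp _; simpa using hp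
      | succ j ih =>
        intro p hp hpl
        have hne : zf (α, β) p ≠ c + 1 := by omega
        have hq := hmove p hp hne
        have hql : zf (α, β) (p + v) + (j : ℤ) = c + 1 := by
          rw [zf_add, hv1]; push_cast at hpl ⊢; omega
        have := ih (p + v) hq (by exact_mod_cast hql)
        have heq : (p + v) + (j : ℤ) • v = p + ((j : ℕ) + 1 : ℤ) • v := by
          rw [add_smul, one_smul]
          abel
        rw [heq] at this
        obtain ⟨h1, h2⟩ := this
        refine ⟨by exact_mod_cast h1, ?_⟩
        rw [show ((j + 1 : ℕ) : ℤ) = ((j : ℕ) : ℤ) + 1 by push_cast; ring]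
        rw [show p + (((j : ℕ) : ℤ) + 1) • v = (p + v) + (j : ℤ) • v from by
          rw [add_smul, one_smul]; abel] at *
        rw [h2, zf_add, hk_def]
        push_cast
        ring
    -- global affine lower bound on lattice points
    have GLB : ∀ p ∈ latPts V, 0 ≤ zf tc p - A + (c + 1 - zf (α, β) p) * (A - a) := by
      intro p hp
      have hle := hL1 p hp
      rcases eq_or_lt_of_le hle with heq | hlt
      · have := hpAm p hp heq
        rw [heq]
        omega
      · have hlc : zf (α, β) p ≤ c := by omega
        set j : ℕ := (c + 1 - zf (α, β) p).toNat with hj_def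
        have hjc : (j : ℤ) = c + 1 - zf (α, β) p := Int.toNat_of_nonneg (by omega)
        obtain ⟨hmem, htc⟩ := ITER j p hp (by omega)
        have hlev : zf (α, β) (p + (j : ℤ) • v) = c + 1 := by
          rw [zf_add, zf_smul, hv1]; omega
        have hA' := hpAm _ hmem hlev
        rw [htc] at hA'
        have hjk : (j : ℤ) * k ≤ (j : ℤ) * (A - a) :=
          mul_le_mul_of_nonneg_left hk (by positivity)
        have hthis : A ≤ zf tc p + (j : ℤ) * k := hA'
        rw [← hjc]
        linarith [hjk, hthis]
    -- transfer to the hull by an affine functional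
    set e' : ℤ × ℤ := (tc.1 - (A - a) * α, tc.2 - (A - a) * β) with he'_def
    have he'zf : ∀ p : ℤ × ℤ, zf e' p = zf tc p - (A - a) * zf (α, β) p := by
      intro p; simp only [zf, he'_def]; ring
    set r : ℤ := A - (c + 1) * (A - a) with hr_def
    have hVlb : ∀ y ∈ toR '' (V : Set (ℤ × ℤ)), (r : ℝ) ≤ rf e' y := by
      rintro y ⟨vv, hvv, rfl⟩
      rw [rf_toR]
      have h1 := GLB vv (hVlat vv hvv)
      have h2 : r ≤ zf e' vv := by rw [he'zf, hr_def]; nlinarith [h1]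
      exact_mod_cast h2
    have hPlb : ∀ x ∈ P, (r : ℝ) ≤ rf e' x := fun x hx => hull_lb e' _ hVlb hx
    -- contradiction point just left of pa
    obtain ⟨δ, hδ, hx'⟩ := interior_shift V pa hpaI (-(toR wc))
    have hval := hPlb _ hx'
    rw [rf_add, rf_smul, rf_neg, rf_toR, rf_toR] at hval
    have hwc' : zf e' wc = 1 := by rw [he'zf, htw, hw0]; ring
    have hpa' : zf e' pa = r := by
      rw [he'zf, hpal, show zf tc pa = a from rfl, hr_def]; ring
    rw [hwc', hpa'] at hval
    push_cast at hval
    linarith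
  -- ====== HF : half membership ======
  have HF : ∀ p ∈ latPts V, zf (α, β) p ≤ c → ∀ k : ℤ, A - a + 1 ≤ k →
      ∃ y ∈ polyHull V, rf (α, β) y = (zf (α, β) p : ℝ) + 1 ∧
        rf tc y ≤ (zf tc p : ℝ) + (k : ℝ) := by
    intro p hp hlc k hk
    set l := zf (α, β) p with hl_def
    set n : ℤ := c + 1 - l with hn_def
    have hn1 : 1 ≤ n := by omega
    have hnR : (1 : ℝ) ≤ (n : ℝ) := by exact_mod_cast hn1
    have hnR0 : (0 : ℝ) < (n : ℝ) := by linarith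
    set y : ℝ × ℝ := (1 - (1 : ℝ) / (n : ℝ)) • toR p + ((1 : ℝ) / (n : ℝ)) • toR pA
      with hy_def
    have hyP : y ∈ P := by
      apply hPconv hp hpAV ?_ (by positivity) (by ring)
      have : (1 : ℝ) / (n : ℝ) ≤ 1 := by
        rw [div_le_one hnR0]; linarith
      linarith
    have hyl : rf (α, β) y = (l : ℝ) + 1 := by
      rw [hy_def, rf_combo, rf_toR, rf_toR, hpAl, show zf (α, β) p = l from rfl]
      have : (l : ℝ) = (c : ℝ) + 1 - (n : ℝ) := by
        rw [show l = c + 1 - n by omega]; push_cast; ring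
      rw [this]
      field_simp
      push_cast
      ring
    have hFp := F p hp hlc
    refine ⟨y, hyP, hyl, ?_⟩
    rw [hy_def, rf_combo, rf_toR, rf_toR, show zf tc pA = A from rfl]
    -- (1 - 1/n) tp + A/n ≤ tp + k
    have hF2 : (A : ℝ) - (n : ℝ) * ((A : ℝ) - (a : ℝ) + 1) ≤ (zf tc p : ℝ) := by
      have : ((A - (c + 1 - l) * (A - a + 1) : ℤ) : ℝ) ≤ ((zf tc p : ℤ) : ℝ) := by
        exact_mod_cast hFp
      push_cast at this
      rw [show ((n : ℤ) : ℝ) = (c : ℝ) + 1 - (l : ℝ) from by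
        rw [hn_def]; push_cast; ring]
      linarith
    have hkR : ((A : ℝ) - (a : ℝ) + 1) ≤ (k : ℝ) := by exact_mod_cast hk
    have hknR : (n : ℝ) * ((A : ℝ) - (a : ℝ) + 1) ≤ (n : ℝ) * (k : ℝ) :=
      mul_le_mul_of_nonneg_left hkR (by linarith)
    have hgoal : (A : ℝ) - (zf tc p : ℝ) ≤ (n : ℝ) * (k : ℝ) := by linarith
    have expand : (1 - (1 : ℝ) / (n : ℝ)) * (zf tc p : ℝ) + (1 : ℝ) / (n : ℝ) * (A : ℝ)
        = (zf tc p : ℝ) + ((A : ℝ) - (zf tc p : ℝ)) / (n : ℝ) := by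
      field_simp
      ring
    rw [expand]
    have : ((A : ℝ) - (zf tc p : ℝ)) / (n : ℝ) ≤ (k : ℝ) := by
      rw [div_le_iff₀ hnR0]
      nlinarith [hgoal]
    linarith
  exact ⟨MC, F, CB, HF⟩
end Dual
end CVAux

open CVAux in
/-- Let `Δ` be a maximal nonhyperelliptic lattice polygon and
`τ` a one-dimensional face of `Δ⁽¹⁾`, with primitive supporting inequality
`α x + β y ≤ c`, and `τ⁽⁻¹⁾` the corresponding relaxed face of `Δ` on the line
`α x + β y = c + 1`. If `|τ⁽⁻¹⁾| - 1 > |τ|` then the number of column vectors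
with base facet `τ⁽⁻¹⁾` is `|τ⁽⁻¹⁾| - 1 - |τ|`; otherwise there are none. -/
theorem count_column_vectors (V : Finset (ℤ × ℤ)) (hV : IsLatticePolygon V)
    (hnh : Nonhyperelliptic V) (hmax : MaximalPoly V)
    (α β c : ℤ) (hτ : IsFaceLine (intPoly V) α β c)
    (nτ nrel ncol : ℕ)
    (hnτ : {p : ℤ × ℤ | toR p ∈ intPoly V ∧ α * p.1 + β * p.2 = c}.ncard = nτ)
    (hnrel : {p : ℤ × ℤ | p ∈ latPts V ∧ α * p.1 + β * p.2 = c + 1}.ncard = nrel)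
    (hncol : {v : ℤ × ℤ | IsColVec V α β (c + 1) v}.ncard = ncol) :
    ((nτ : ℤ) < (nrel : ℤ) - 1 → (ncol : ℤ) = (nrel : ℤ) - 1 - nτ) ∧
    ((nrel : ℤ) - 1 ≤ (nτ : ℤ) → ncol = 0) := by
  classical
  obtain ⟨hcop, hsup0, x₁, x₂, hx₁Q, hx₂Q, hx12, hx₁L, hx₂L⟩ := hτ
  obtain ⟨σ, τσ, hστ⟩ := hcop
  -- the dual basis
  set u : ℤ × ℤ := (σ, τσ) with hu_def
  set w : ℤ × ℤ := (-β, α) with hw_def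
  set te : ℤ × ℤ := (-τσ, σ) with hte_def
  set w2 : ℤ × ℤ := (β, -α) with hw2_def
  set te2 : ℤ × ℤ := (τσ, -σ) with hte2_def
  have h11 : α * u.1 + te.1 * w.1 = 1 := by simp only [hu_def, hte_def, hw_def]; linarith [hστ]
  have h12 : β * u.1 + te.2 * w.1 = 0 := by simp only [hu_def, hte_def, hw_def]; ring
  have h21 : α * u.2 + te.1 * w.2 = 0 := by simp only [hu_def, hte_def, hw_def]; ring
  have h22 : β * u.2 + te.2 * w.2 = 1 := by simp only [hu_def, hte_def, hw_def]; linarith [hστ]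
  have g11 : α * u.1 + te2.1 * w2.1 = 1 := by simp only [hu_def, hte2_def, hw2_def]; linarith [hστ]
  have g12 : β * u.1 + te2.2 * w2.1 = 0 := by simp only [hu_def, hte2_def, hw2_def]; ring
  have g21 : α * u.2 + te2.1 * w2.2 = 0 := by simp only [hu_def, hte2_def, hw2_def]; ring
  have g22 : β * u.2 + te2.2 * w2.2 = 1 := by simp only [hu_def, hte2_def, hw2_def]; linarith [hστ]
  have hu1 : zf (α, β) u = 1 := by simp only [zf, hu_def]; linarith [hστ]
  have hw0 : zf (α, β) w = 0 := by simp only [zf, hw_def]; ring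
  have htw : zf te w = 1 := by simp only [zf, hte_def, hw_def]; linarith [hστ]
  have htu : zf te u = 0 := by simp only [zf, hte_def, hu_def]; ring
  have hw20 : zf (α, β) w2 = 0 := by simp only [zf, hw2_def]; ring
  have htw2 : zf te2 w2 = 1 := by simp only [zf, hte2_def, hw2_def]; linarith [hστ]
  have htu2 : zf te2 u = 0 := by simp only [zf, hte2_def, hu_def]; ring
  have hte2neg : ∀ p : ℤ × ℤ, zf te2 p = -zf te p := by
    intro p; simp only [zf, hte_def, hte2_def]; ring
  have hrte2neg : ∀ x : ℝ × ℝ, rf te2 x = -rf te x := by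
    intro x; simp only [rf, hte_def, hte2_def]; push_cast; ring
  -- basic membership facts
  set P := polyHull V with hP_def
  have hPconv : Convex ℝ P := convex_convexHull ℝ _
  have hVlat : ∀ v ∈ V, v ∈ latPts V := fun v hv =>
    subset_convexHull ℝ _ (mem_image_of_mem toR hv)
  have hIlat : ∀ p ∈ intPts V, p ∈ latPts V := fun p hp =>
    (interior_subset (hp : toR p ∈ interior (polyHull V)) : toR p ∈ polyHull V)
  have hQint : intPoly V ⊆ interior P := by
    apply convexHull_min
    · rintro y ⟨q, hq, rfl⟩
      exact hq
    · exact hPconv.interior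
  have hIQ : ∀ p ∈ intPts V, toR p ∈ intPoly V := fun p hp =>
    subset_convexHull ℝ _ (mem_image_of_mem toR hp)
  have hsup : ∀ x ∈ intPoly V, rf (α, β) x ≤ (c : ℝ) := hsup0
  have hVne : V.Nonempty := by
    obtain ⟨p, q, r, hp, _, _, _⟩ := hV
    exact ⟨p, hp⟩
  -- uniform bounds for integer functionals on lattice points
  have BND : ∀ e : ℤ × ℤ, ∃ N : ℤ, ∀ p ∈ latPts V, zf e p ≤ N := by
    intro e
    set N : ℤ := (V.image (zf e)).max' (hVne.image _) with hN_def
    refine ⟨N, fun p hp => ?_⟩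
    have hb : ∀ y ∈ toR '' (V : Set (ℤ × ℤ)), (-(N : ℝ)) ≤ rf (-e.1, -e.2) y := by
      rintro y ⟨vv, hvv, rfl⟩
      rw [rf_toR]
      have h1 : zf e vv ≤ N := Finset.le_max' _ _ (Finset.mem_image_of_mem _ hvv)
      have h2 : zf (-e.1, -e.2) vv = -zf e vv := by simp only [zf]; ring
      rw [h2]
      have h1R : ((zf e vv : ℤ) : ℝ) ≤ (N : ℝ) := by exact_mod_cast h1
      push_cast
      linarith
    have h3 := hull_lb _ _ hb (hp : toR p ∈ P)
    rw [rf_toR] at h3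
    have h2 : zf (-e.1, -e.2) p = -zf e p := by simp only [zf]; ring
    rw [h2] at h3
    have h4 : (zf e p : ℝ) ≤ (N : ℝ) := by push_cast at h3; linarith
    exact_mod_cast h4
  obtain ⟨NtU, hNtU⟩ := BND te
  obtain ⟨NtL', hNtL'⟩ := BND te2
  have hNtL : ∀ p ∈ latPts V, -NtL' ≤ zf te p := by
    intro p hp
    have := hNtL' p hp
    rw [hte2neg] at this
    omega
  obtain ⟨NlU, hNlU⟩ := BND (α, β)
  obtain ⟨NlL', hNlL'⟩ := BND (-α, -β)
  have hNlL : ∀ p ∈ latPts V, -NlL' ≤ zf (α, β) p := by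
    intro p hp
    have := hNlL' p hp
    have h2 : zf (-α, -β) p = -zf (α, β) p := by simp only [zf]; ring
    omega
  -- interior lattice points at level c exist
  have hSc : ∃ q ∈ intPts V, zf (α, β) q = c := by
    have hSbd : ∀ y ∈ toR '' intPts V, rf (α, β) y ≤ (c : ℝ) := by
      rintro y ⟨q, hq, rfl⟩
      exact hsup _ (hIQ q hq)
    obtain ⟨y, ⟨q, hq, rfl⟩, hy⟩ := hull_slice_mem (α, β) (c : ℝ) hSbd hx₁Q hx₁L
    rw [rf_toR] at hy
    exact ⟨q, hq, by exact_mod_cast hy⟩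
  -- minimal and maximal interior points at level c
  have hminex : ∃ aa : ℤ, (∃ q ∈ intPts V, zf (α, β) q = c ∧ zf te q = aa) ∧
      ∀ z' : ℤ, (∃ q ∈ intPts V, zf (α, β) q = c ∧ zf te q = z') → aa ≤ z' := by
    refine Int.exists_least_of_bdd ⟨-NtL', ?_⟩ ?_
    · rintro z' ⟨q, hq, _, rfl⟩
      exact hNtL q (hIlat q hq)
    · obtain ⟨q, hq, hql⟩ := hSc
      exact ⟨zf te q, q, hq, hql, rfl⟩
  obtain ⟨a, ⟨pa, hpaI, hpal, hpat⟩, ham⟩ := hminex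
  have hpam : ∀ q ∈ intPts V, zf (α, β) q = c → zf te pa ≤ zf te q := by
    intro q hq hql
    rw [hpat]
    exact ham _ ⟨q, hq, hql, rfl⟩
  have hmaxex : ∃ bb : ℤ, (∃ q ∈ intPts V, zf (α, β) q = c ∧ zf te q = bb) ∧
      ∀ z' : ℤ, (∃ q ∈ intPts V, zf (α, β) q = c ∧ zf te q = z') → z' ≤ bb := by
    refine Int.exists_greatest_of_bdd ⟨NtU, ?_⟩ ?_
    · rintro z' ⟨q, hq, _, rfl⟩
      exact hNtU q (hIlat q hq)
    · obtain ⟨q, hq, hql⟩ := hSc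
      exact ⟨zf te q, q, hq, hql, rfl⟩
  obtain ⟨b, ⟨pb, hpbI, hpbl, hpbt⟩, hbm⟩ := hmaxex
  have hpbm : ∀ q ∈ intPts V, zf (α, β) q = c → zf te q ≤ zf te pb := by
    intro q hq hql
    rw [hpbt]
    exact hbm _ ⟨q, hq, hql, rfl⟩
  -- the face is one-dimensional: a < b
  have hSbd : ∀ y ∈ toR '' intPts V, rf (α, β) y ≤ (c : ℝ) := by
    rintro y ⟨q, hq, rfl⟩
    exact hsup _ (hIQ q hq)
  have hSlb : ∀ y ∈ toR '' intPts V, rf (α, β) y = (c : ℝ) → (a : ℝ) ≤ rf te y := by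
    rintro y ⟨q, hq, rfl⟩ hyl
    rw [rf_toR] at hyl ⊢
    have : zf (α, β) q = c := by exact_mod_cast hyl
    have := hpam q hq this
    rw [hpat] at this
    exact_mod_cast this
  have hSub : ∀ y ∈ toR '' intPts V, rf (α, β) y = (c : ℝ) → (-(b : ℝ)) ≤ rf te2 y := by
    rintro y ⟨q, hq, rfl⟩ hyl
    rw [rf_toR] at hyl ⊢
    have hlq : zf (α, β) q = c := by exact_mod_cast hyl
    have := hpbm q hq hlq
    rw [hpbt] at this
    rw [hte2neg]
    have : ((zf te q : ℤ) : ℝ) ≤ (b : ℝ) := by exact_mod_cast this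
    push_cast
    linarith
  have hx₁a : (a : ℝ) ≤ rf te x₁ := hull_slice_lb _ _ _ _ hSbd hSlb hx₁Q hx₁L
  have hx₂a : (a : ℝ) ≤ rf te x₂ := hull_slice_lb _ _ _ _ hSbd hSlb hx₂Q hx₂L
  have hx₁b : rf te x₁ ≤ (b : ℝ) := by
    have := hull_slice_lb _ _ _ _ hSbd hSub hx₁Q hx₁L
    rw [hrte2neg] at this; linarith
  have hx₂b : rf te x₂ ≤ (b : ℝ) := by
    have := hull_slice_lb _ _ _ _ hSbd hSub hx₂Q hx₂L
    rw [hrte2neg] at this; linarith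
  have hab : a < b := by
    by_contra hcon
    push_neg at hcon
    have hba : (b : ℝ) ≤ (a : ℝ) := by exact_mod_cast hcon
    apply hx12
    apply coords_ext h11 h12 h21 h22
    · rw [rf_pair, rf_pair, hx₁L, hx₂L]
    · linarith
  have htpa : zf te pa = a := hpat
  have htpb : zf te pb = b := hpbt
  -- Koelman bound: all lattice points at level ≤ c + 1
  have hL1 : ∀ p ∈ latPts V, zf (α, β) p ≤ c + 1 :=
    levels_le h11 h12 h21 h22 V c hu1 hw0 htw htu hsup pa pb hpaI hpal hpbI hpbl
      (by rw [htpa, htpb]; exact hab)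
  -- the maximal level of lattice points is exactly c + 1
  have htopex : ∃ pt ∈ latPts V, zf (α, β) pt = c + 1 := by
    set M0 : ℤ := (V.image (zf (α, β))).max' (hVne.image _) with hM0_def
    obtain ⟨vstar, hvstar, hvM⟩ := Finset.mem_image.mp (Finset.max'_mem (V.image (zf (α, β))) (hVne.image _))
    rw [← hM0_def] at hvM
    have hM0le : M0 ≤ c + 1 := by rw [← hvM]; exact hL1 vstar (hVlat vstar hvstar)
    have hM0lat : ∀ p ∈ latPts V, zf (α, β) p ≤ M0 := by
      intro p hp
      have hb' : ∀ y ∈ toR '' (V : Set (ℤ × ℤ)), (-(M0 : ℝ)) ≤ rf (-α, -β) y := by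
        rintro y ⟨vv, hvv, rfl⟩
        rw [rf_toR]
        have h1 : zf (α, β) vv ≤ M0 := Finset.le_max' _ _ (Finset.mem_image_of_mem _ hvv)
        have h2 : zf (-α, -β) vv = -zf (α, β) vv := by simp only [zf]; ring
        rw [h2]
        have h1R : ((zf (α, β) vv : ℤ) : ℝ) ≤ (M0 : ℝ) := by exact_mod_cast h1
        push_cast
        linarith
      have h3 := hull_lb _ _ hb' (hp : toR p ∈ P)
      rw [rf_toR] at h3
      have h2 : zf (-α, -β) p = -zf (α, β) p := by simp only [zf]; ring
      rw [h2] at h3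
      have h4 : (zf (α, β) p : ℝ) ≤ (M0 : ℝ) := by push_cast at h3; linarith
      exact_mod_cast h4
    -- a point strictly above level c
    obtain ⟨δ, hδ, hx''⟩ := interior_shift V pa (hpaI) (toR u)
    have hx''P : (toR pa + δ • toR u) ∈ P := hx''
    have hx''M : rf (α, β) (toR pa + δ • toR u) ≤ (M0 : ℝ) := by
      have hb' : ∀ y ∈ toR '' (V : Set (ℤ × ℤ)), (-(M0 : ℝ)) ≤ rf (-α, -β) y := by
        rintro y ⟨vv, hvv, rfl⟩
        rw [rf_toR]
        have h1 : zf (α, β) vv ≤ M0 := Finset.le_max' _ _ (Finset.mem_image_of_mem _ hvv)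
        have h2 : zf (-α, -β) vv = -zf (α, β) vv := by simp only [zf]; ring
        rw [h2]
        have h1R : ((zf (α, β) vv : ℤ) : ℝ) ≤ (M0 : ℝ) := by exact_mod_cast h1
        push_cast
        linarith
      have h3 := hull_lb _ _ hb' hx''P
      have h2 : ∀ x : ℝ × ℝ, rf (-α, -β) x = -rf (α, β) x := by
        intro x; simp only [rf]; push_cast; ring
      rw [h2] at h3
      linarith
    rw [rf_add, rf_smul, rf_toR, rf_toR, hpal, hu1] at hx''M
    have hcM : (c : ℝ) < (M0 : ℝ) := by push_cast at hx''M ⊢; linarith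
    have hcM' : c < M0 := by exact_mod_cast hcM
    have : M0 = c + 1 := by omega
    exact ⟨vstar, hVlat vstar hvstar, by omega⟩
  -- extremal lattice points at level c + 1
  have hminex2 : ∃ AA : ℤ, (∃ q ∈ latPts V, zf (α, β) q = c + 1 ∧ zf te q = AA) ∧
      ∀ z' : ℤ, (∃ q ∈ latPts V, zf (α, β) q = c + 1 ∧ zf te q = z') → AA ≤ z' := by
    refine Int.exists_least_of_bdd ⟨-NtL', ?_⟩ ?_
    · rintro z' ⟨q, hq, _, rfl⟩
      exact hNtL q hq
    · obtain ⟨q, hq, hql⟩ := htopex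
      exact ⟨zf te q, q, hq, hql, rfl⟩
  obtain ⟨A, ⟨pA, hpAlat, hpAl, hpAt⟩, hAm⟩ := hminex2
  have hpAm : ∀ q ∈ latPts V, zf (α, β) q = c + 1 → zf te pA ≤ zf te q := by
    intro q hq hql
    rw [hpAt]
    exact hAm _ ⟨q, hq, hql, rfl⟩
  have hmaxex2 : ∃ BB : ℤ, (∃ q ∈ latPts V, zf (α, β) q = c + 1 ∧ zf te q = BB) ∧
      ∀ z' : ℤ, (∃ q ∈ latPts V, zf (α, β) q = c + 1 ∧ zf te q = z') → z' ≤ BB := by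
    refine Int.exists_greatest_of_bdd ⟨NtU, ?_⟩ ?_
    · rintro z' ⟨q, hq, _, rfl⟩
      exact hNtU q hq
    · obtain ⟨q, hq, hql⟩ := htopex
      exact ⟨zf te q, q, hq, hql, rfl⟩
  obtain ⟨B, ⟨pB, hpBlat, hpBl, hpBt⟩, hBm⟩ := hmaxex2
  have hpBm : ∀ q ∈ latPts V, zf (α, β) q = c + 1 → zf te q ≤ zf te pB := by
    intro q hq hql
    rw [hpBt]
    exact hBm _ ⟨q, hq, hql, rfl⟩
  have hAB : A ≤ B := by
    rw [← hpBt]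
    exact hAm _ ⟨pB, hpBlat, hpBl, rfl⟩
  -- mirrored minimality statements
  have hpbm2 : ∀ q ∈ intPts V, zf (α, β) q = c → zf te2 pb ≤ zf te2 q := by
    intro q hq hql
    rw [hte2neg, hte2neg]
    have := hpbm q hq hql
    omega
  have hpBm2 : ∀ q ∈ latPts V, zf (α, β) q = c + 1 → zf te2 pB ≤ zf te2 q := by
    intro q hq hql
    rw [hte2neg, hte2neg]
    have := hpBm q hq hql
    omega
  -- instantiate the core lemma on both sides
  obtain ⟨MCL, FL, CBL, HFL⟩ :=
    core h11 h12 h21 h22 V c hu1 hw0 htw htu pa pA hpaI hpal hpam hpAlat hpAl hpAm hL1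
  obtain ⟨MCR, FR, CBR, HFR⟩ :=
    core g11 g12 g21 g22 V c hu1 hw20 htw2 htu2 pb pB hpbI hpbl hpbm2 hpBlat hpBl hpBm2 hL1
  -- every column vector has level exactly 1
  have hColLev : ∀ v : ℤ × ℤ, IsColVec V α β (c + 1) v → zf (α, β) v = 1 := by
    intro v hv
    obtain ⟨hvne, hmove0⟩ := hv
    have hmove : ∀ p ∈ latPts V, zf (α, β) p ≠ c + 1 → p + v ∈ latPts V :=
      fun p hp hne => hmove0 p hp hne
    have hpalat := hIlat pa hpaI
    by_contra hcon
    rcases lt_or_ge (zf (α, β) v) 1 with hle0 | hge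
    · -- level of v is ≤ 0 : iterate forever inside the polygon
      have hle0' : zf (α, β) v ≤ 0 := by omega
      have hiter : ∀ n : ℕ, pa + (n : ℤ) • v ∈ latPts V ∧
          zf (α, β) (pa + (n : ℤ) • v) = c + n * zf (α, β) v ∧
          zf te (pa + (n : ℤ) • v) = a + n * zf te v := by
        intro n
        induction n with
        | zero => simp only [Nat.cast_zero, zero_smul, add_zero, zero_mul]
                  exact ⟨hpalat, hpal, htpa⟩
        | succ n ih =>
          obtain ⟨h1, h2, h3⟩ := ih
          have hn0 : (0 : ℤ) ≤ (n : ℤ) := Int.natCast_nonneg n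
          have hmul : (n : ℤ) * zf (α, β) v ≤ 0 := mul_nonpos_of_nonneg_of_nonpos hn0 hle0'
          have hne : zf (α, β) (pa + (n : ℤ) • v) ≠ c + 1 := by omega
          have hmem := hmove _ h1 hne
          have heq : (pa + (n : ℤ) • v) + v = pa + ((n + 1 : ℕ) : ℤ) • v := by
            push_cast
            rw [add_smul, one_smul]
            abel
          rw [heq] at hmem
          refine ⟨hmem, ?_, ?_⟩
          · rw [show pa + ((n + 1 : ℕ) : ℤ) • v = (pa + (n : ℤ) • v) + v from (heq).symm,
              zf_add, h2]
            push_cast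
            ring
          · rw [show pa + ((n + 1 : ℕ) : ℤ) • v = (pa + (n : ℤ) • v) + v from (heq).symm,
              zf_add, h3]
            push_cast
            ring
      rcases eq_or_lt_of_le hle0' with heq0 | hlt0
      · -- level of v = 0 : transversal coordinate escapes
        have hrecv := recon_int h11 h12 h21 h22 v
        rw [heq0, zero_smul, zero_add] at hrecv
        have htv : zf te v ≠ 0 := by
          intro h0
          apply hvne
          rw [hrecv, h0, zero_smul]
        rcases lt_or_gt_of_ne htv with hneg | hpos
        · -- te v ≤ -1
          set n : ℕ := (a + NtL' + 1).toNat with hn_def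
          have hnge : (a + NtL' + 1 : ℤ) ≤ (n : ℤ) := Int.self_le_toNat _
          obtain ⟨hm, _, ht⟩ := hiter n
          have hlow := hNtL _ hm
          rw [ht] at hlow
          have hmul : (n : ℤ) * zf te v ≤ (n : ℤ) * (-1) :=
            mul_le_mul_of_nonneg_left (by omega) (Int.natCast_nonneg n)
          omega
        · set n : ℕ := (NtU - a + 1).toNat with hn_def
          have hnge : (NtU - a + 1 : ℤ) ≤ (n : ℤ) := Int.self_le_toNat _
          obtain ⟨hm, _, ht⟩ := hiter n
          have hhigh := hNtU _ hm
          rw [ht] at hhigh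
          have hmul : (n : ℤ) * 1 ≤ (n : ℤ) * zf te v :=
            mul_le_mul_of_nonneg_left (by omega) (Int.natCast_nonneg n)
          omega
      · -- level of v ≤ -1 : level escapes below
        set n : ℕ := (c + NlL' + 1).toNat with hn_def
        have hnge : (c + NlL' + 1 : ℤ) ≤ (n : ℤ) := Int.self_le_toNat _
        obtain ⟨hm, hl, _⟩ := hiter n
        have hlow := hNlL _ hm
        rw [hl] at hlow
        have hmul : (n : ℤ) * zf (α, β) v ≤ (n : ℤ) * (-1) :=
          mul_le_mul_of_nonneg_left (by omega) (Int.natCast_nonneg n)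
        omega
    · -- level of v ≥ 2 : jump over the top level
      have hge2 : 2 ≤ zf (α, β) v := by omega
      have hmem := hmove pa hpalat (by omega)
      have := hL1 _ hmem
      rw [zf_add, hpal] at this
      omega
  -- segment membership helpers
  have hsegQ : ∀ j : ℤ, j ∈ Set.Icc a b → toR (c • u + j • w) ∈ intPoly V := by
    rintro j ⟨hja, hjb⟩
    have hbapos : (0 : ℝ) < (b : ℝ) - (a : ℝ) := by
      have : (a : ℝ) < (b : ℝ) := by exact_mod_cast hab
      linarith
    set θ : ℝ := ((j : ℝ) - (a : ℝ)) / ((b : ℝ) - (a : ℝ)) with hθ_def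
    have hjaR : (a : ℝ) ≤ (j : ℝ) := by exact_mod_cast hja
    have hjbR : (j : ℝ) ≤ (b : ℝ) := by exact_mod_cast hjb
    have hθ0 : 0 ≤ θ := div_nonneg (by linarith) (le_of_lt hbapos)
    have hθ1 : θ ≤ 1 := by rw [hθ_def, div_le_one hbapos]; linarith
    have hcombo : toR (c • u + j • w) = (1 - θ) • toR pa + θ • toR pb := by
      apply coords_ext h11 h12 h21 h22
      · rw [rf_toR, zf_comb, hu1, hw0, rf_combo, rf_toR, rf_toR, hpal, hpbl]
        push_cast; ring
      · rw [rf_toR, zf_comb, htu, htw, rf_combo, rf_toR, rf_toR, htpa, htpb, hθ_def]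
        push_cast
        field_simp
        ring
    rw [hcombo]
    exact (convex_convexHull ℝ _) (hIQ pa hpaI) (hIQ pb hpbI) (by linarith) hθ0 (by ring)
  have hsegP : ∀ j : ℤ, j ∈ Set.Icc A B → toR ((c + 1) • u + j • w) ∈ P := by
    rintro j ⟨hjA, hjB⟩
    rcases eq_or_lt_of_le hAB with hABeq | hABlt
    · have hjA' : j = A := by omega
      have hpteq : (c + 1) • u + j • w = pA := by
        have := recon_int h11 h12 h21 h22 pA
        rw [hpAl, hpAt] at this
        rw [hjA', this]
      rw [hpteq]
      exact hpAlat
    · have hbapos : (0 : ℝ) < (B : ℝ) - (A : ℝ) := by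
        have : (A : ℝ) < (B : ℝ) := by exact_mod_cast hABlt
        linarith
      set θ : ℝ := ((j : ℝ) - (A : ℝ)) / ((B : ℝ) - (A : ℝ)) with hθ_def
      have hjaR : (A : ℝ) ≤ (j : ℝ) := by exact_mod_cast hjA
      have hjbR : (j : ℝ) ≤ (B : ℝ) := by exact_mod_cast hjB
      have hθ0 : 0 ≤ θ := div_nonneg (by linarith) (le_of_lt hbapos)
      have hθ1 : θ ≤ 1 := by rw [hθ_def, div_le_one hbapos]; linarith
      have hcombo : toR ((c + 1) • u + j • w) = (1 - θ) • toR pA + θ • toR pB := by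
        apply coords_ext h11 h12 h21 h22
        · rw [rf_toR, zf_comb, hu1, hw0, rf_combo, rf_toR, rf_toR, hpAl, hpBl]
          push_cast; ring
        · rw [rf_toR, zf_comb, htu, htw, rf_combo, rf_toR, rf_toR, hpAt, hpBt, hθ_def]
          push_cast
          field_simp
          ring
      rw [hcombo]
      exact hPconv hpAlat hpBlat (by linarith) hθ0 (by ring)
  -- characterization of the three sets
  have hτset : {p : ℤ × ℤ | toR p ∈ intPoly V ∧ α * p.1 + β * p.2 = c}
      = (fun j : ℤ => c • u + j • w) '' (Set.Icc a b) := by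
    ext p
    simp only [mem_setOf_eq, Set.mem_image]
    constructor
    · rintro ⟨hpQ, hpl⟩
      have hpl' : zf (α, β) p = c := hpl
      have hpI : p ∈ intPts V := hQint hpQ
      have hlow := hpam p hpI hpl'
      have hhigh := hpbm p hpI hpl'
      rw [htpa] at hlow
      rw [htpb] at hhigh
      refine ⟨zf te p, ⟨hlow, hhigh⟩, ?_⟩
      have := recon_int h11 h12 h21 h22 p
      rw [hpl'] at this
      exact this.symm
    · rintro ⟨j, hj, rfl⟩
      refine ⟨hsegQ j hj, ?_⟩
      show zf (α, β) (c • u + j • w) = c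
      rw [zf_comb, hu1, hw0]; ring
  have hrelset : {p : ℤ × ℤ | p ∈ latPts V ∧ α * p.1 + β * p.2 = c + 1}
      = (fun j : ℤ => (c + 1) • u + j • w) '' (Set.Icc A B) := by
    ext p
    simp only [mem_setOf_eq, Set.mem_image]
    constructor
    · rintro ⟨hpP, hpl⟩
      have hpl' : zf (α, β) p = c + 1 := hpl
      have hlow := hpAm p hpP hpl'
      have hhigh := hpBm p hpP hpl'
      rw [hpAt] at hlow
      rw [hpBt] at hhigh
      refine ⟨zf te p, ⟨hlow, hhigh⟩, ?_⟩
      have := recon_int h11 h12 h21 h22 p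
      rw [hpl'] at this
      exact this.symm
    · rintro ⟨j, hj, rfl⟩
      refine ⟨hsegP j hj, ?_⟩
      show zf (α, β) ((c + 1) • u + j • w) = c + 1
      rw [zf_comb, hu1, hw0]; ring
  have hcvset : {v : ℤ × ℤ | IsColVec V α β (c + 1) v}
      = (fun k : ℤ => u + k • w) '' (Set.Icc (A - a + 1) (B - b - 1)) := by
    ext v
    simp only [mem_setOf_eq, Set.mem_image]
    constructor
    · intro hv
      have hlev1 := hColLev v hv
      have hmove : ∀ p ∈ latPts V, zf (α, β) p ≠ c + 1 → p + v ∈ latPts V :=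
        fun p hp hne => hv.2 p hp hne
      have hbl := CBL v hmove hlev1
      have hbr := CBR v hmove hlev1
      rw [hpAt, htpa] at hbl
      rw [hte2neg, hte2neg, hte2neg, hpBt, htpb] at hbr
      refine ⟨zf te v, ⟨by omega, by omega⟩, ?_⟩
      have := recon_int h11 h12 h21 h22 v
      rw [hlev1, one_smul] at this
      exact this.symm
    · rintro ⟨k, ⟨hk1, hk2⟩, rfl⟩
      refine ⟨?_, ?_⟩
      · intro h0
        have h1 := congrArg (zf (α, β)) h0
        rw [zf_add, zf_smul, hu1, hw0] at h1
        simp only [zf, Prod.fst_zero, Prod.snd_zero, mul_zero, add_zero] at h1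
        omega
      · intro p hp hne0
        have hne : zf (α, β) p ≠ c + 1 := hne0
        have hl : zf (α, β) p ≤ c := by have := hL1 p hp; omega
        have hkl : zf te pA - zf te pa + 1 ≤ k := by rw [hpAt, htpa]; omega
        obtain ⟨ylo, hyloP, hylol, hylot⟩ := HFL p hp hl k hkl
        have hkr : zf te2 pB - zf te2 pb + 1 ≤ -k := by
          rw [hte2neg, hte2neg, hpBt, htpb]; omega
        obtain ⟨yhi, hyhiP, hyhil, hyhit⟩ := HFR p hp hl (-k) hkr
        rw [hrte2neg, hte2neg] at hyhit
        have hhi : (zf te p : ℝ) + (k : ℝ) ≤ rf te yhi := by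
          push_cast at hyhit
          linarith
        have hlo : rf te ylo ≤ (zf te p : ℝ) + (k : ℝ) := by
          push_cast at hylot ⊢
          linarith
        show toR (p + (u + k • w)) ∈ P
        have hTl : zf (α, β) (p + (u + k • w)) = zf (α, β) p + 1 := by
          rw [zf_add, zf_add, zf_smul, hu1, hw0]; ring
        have hTt : zf te (p + (u + k • w)) = zf te p + k := by
          rw [zf_add, zf_add, zf_smul, htu, htw]; ring
        rcases eq_or_lt_of_le (le_trans hlo hhi) with heq | hlt
        · have hyeq : rf te ylo = (zf te p : ℝ) + (k : ℝ) := by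
            rw [heq] at hlo ⊢
            linarith
          have : toR (p + (u + k • w)) = ylo := by
            apply coords_ext h11 h12 h21 h22
            · rw [rf_toR, hTl, hylol]; push_cast; ring
            · rw [rf_toR, hTt, hyeq]; push_cast; ring
          rw [this]
          exact hyloP
        · set θ : ℝ := (((zf te p : ℝ) + (k : ℝ)) - rf te ylo) / (rf te yhi - rf te ylo)
            with hθ_def
          have hdpos : (0 : ℝ) < rf te yhi - rf te ylo := by linarith
          have hθ0 : 0 ≤ θ := div_nonneg (by linarith) (le_of_lt hdpos)
          have hθ1 : θ ≤ 1 := by rw [hθ_def, div_le_one hdpos]; linarith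
          have hcombo : toR (p + (u + k • w)) = (1 - θ) • ylo + θ • yhi := by
            apply coords_ext h11 h12 h21 h22
            · rw [rf_toR, hTl, rf_combo, hylol, hyhil]
              push_cast; ring
            · rw [rf_toR, hTt, rf_combo, hθ_def]
              push_cast
              field_simp
              ring
          rw [hcombo]
          exact hPconv hyloP hyhiP (by linarith) hθ0 (by ring)
  -- counting
  have hinj : ∀ m : ℤ, Function.Injective (fun j : ℤ => m • u + j • w) := by
    intro m j j' hjj
    have h1 := congrArg (zf te) hjj
    simp only [zf_comb, htu, htw] at h1
    omega
  have hinjc : Function.Injective (fun k : ℤ => u + k • w) := by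
    intro j j' hjj
    have h1 := congrArg (zf te) hjj
    simp only [zf_add, zf_smul, htu, htw] at h1
    omega
  have hnτ' : nτ = (b + 1 - a).toNat := by
    rw [← hnτ, hτset, Set.ncard_image_of_injective _ (hinj c), ← Finset.coe_Icc,
      Set.ncard_coe_finset, Int.card_Icc]
  have hnrel' : nrel = (B + 1 - A).toNat := by
    rw [← hnrel, hrelset, Set.ncard_image_of_injective _ (hinj (c + 1)), ← Finset.coe_Icc,
      Set.ncard_coe_finset, Int.card_Icc]
  have hncol' : ncol = (B - b - 1 + 1 - (A - a + 1)).toNat := by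
    rw [← hncol, hcvset, Set.ncard_image_of_injective _ hinjc, ← Finset.coe_Icc,
      Set.ncard_coe_finset, Int.card_Icc]
  constructor
  · intro h
    omega
  · intro h
    omega
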